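/- Let K be a field with a valuation v : K → ℤₘ₀. Let d ∈ K satisfy v d = 1 and suppose that the residue of d is not a square in the residue field of the valuation ring of v. Let π ∈ K be a uniformizer (v π = Multiplicative.ofAdd (−1) viewed in ℤₘ₀). Then the quaternion algebra ℍ[K, d, π] is a division ring: every nonzero element of ℍ[K, d, π] is a unit. -/

import Mathlib

open scoped Quaternion

local notation "ℤₘ₀" => WithZero (Multiplicative ℤ)

section Aux

variable {K : Type*} [Field K] (v : Valuation K ℤₘ₀)

/-- An element of the valuation subring with valuation one is a unit. -/
lemma aux_isUnit {x : v.valuationSubring} (hx : v (x : K) = 1) : IsUnit x := by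
  have hx0 : (x : K) ≠ 0 := by
    intro h; rw [h, map_zero] at hx; exact zero_ne_one hx
  have hinv : (x : K)⁻¹ ∈ v.valuationSubring := by
    rw [Valuation.mem_valuationSubring_iff, map_inv₀, hx, inv_one]
  refine IsUnit.of_mul_eq_one ⟨(x : K)⁻¹, hinv⟩ ?_
  ext
  exact mul_inv_cancel₀ hx0

/-- Key lemma: if `d` has valuation one and nonsquare residue, then `a ^ 2 - d * b ^ 2`
has a "square" (even) valuation whenever `a, b` are not both zero. -/
lemma aux_even_val (d : K) (hd : v d = 1)
    (hd_res : ¬ IsSquare (IsLocalRing.residue v.valuationSubring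
      ⟨d, (Valuation.mem_valuationSubring_iff v d).mpr hd.le⟩))
    (a b : K) (h : a ≠ 0 ∨ b ≠ 0) :
    ∃ γ : Multiplicative ℤ, v (a ^ 2 - d * b ^ 2) = (γ : ℤₘ₀) ^ 2 := by
  by_cases hb : b = 0
  · have ha : a ≠ 0 := h.resolve_right (fun h' => h' hb)
    have hva : v a ≠ 0 := by simpa using ha
    refine ⟨WithZero.unzero hva, ?_⟩
    rw [hb]
    rw [show a ^ 2 - d * 0 ^ 2 = a ^ 2 by ring, map_pow, WithZero.coe_unzero]
  · have hvb : v b ≠ 0 := by simpa using hb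
    by_cases hne : v (a ^ 2) = v (d * b ^ 2)
    · -- equal valuations: use the residue field argument
      have ha : a ≠ 0 := by
        intro h0
        apply pow_ne_zero 2 hvb
        have hz : v (d * b ^ 2) = 0 := by rw [← hne, h0]; simp
        rw [map_mul, map_pow, hd, one_mul] at hz
        exact hz
      have hva : v a ≠ 0 := by simpa using ha
      -- v a = v b
      have hvab : v a = v b := by
        simp only [map_mul, map_pow, hd, one_mul] at hne
        obtain ⟨na, hna⟩ := WithZero.ne_zero_iff_exists.mp hva
        obtain ⟨nb, hnb⟩ := WithZero.ne_zero_iff_exists.mp hvb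
        rw [← hna, ← hnb, ← WithZero.coe_pow, ← WithZero.coe_pow, WithZero.coe_inj] at hne
        have : Multiplicative.toAdd (na ^ 2) = Multiplicative.toAdd (nb ^ 2) := by rw [hne]
        simp only [toAdd_pow, nsmul_eq_mul] at this
        have : Multiplicative.toAdd na = Multiplicative.toAdd nb := by omega
        rw [← hna, ← hnb, Multiplicative.toAdd.injective this]
      set t : K := a / b with ht
      have hvt : v t = 1 := by
        rw [ht, map_div₀, hvab, div_self hvb]
      have htmem : t ∈ v.valuationSubring := by
        rw [Valuation.mem_valuationSubring_iff, hvt]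
      have htd : t ^ 2 - d ∈ v.valuationSubring := by
        exact sub_mem (pow_mem htmem 2)
          ((Valuation.mem_valuationSubring_iff v d).mpr hd.le)
      -- the residue of t² - d is nonzero
      have hres : IsLocalRing.residue v.valuationSubring ⟨t ^ 2 - d, htd⟩ ≠ 0 := by
        intro h0
        apply hd_res
        have heq : (⟨t ^ 2 - d, htd⟩ : v.valuationSubring)
            = (⟨t, htmem⟩ : v.valuationSubring) ^ 2
              - ⟨d, (Valuation.mem_valuationSubring_iff v d).mpr hd.le⟩ := by
          ext; simp
        rw [heq, map_sub, map_pow, sub_eq_zero] at h0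
        exact ⟨_, by rw [← h0]; ring⟩
      -- hence t² - d is a unit of the valuation subring, so v (t² - d) = 1
      have hunit : IsUnit (⟨t ^ 2 - d, htd⟩ : v.valuationSubring) := by
        by_contra hnu
        exact hres (Ideal.Quotient.eq_zero_iff_mem.mpr hnu)
      have hv1 : v (t ^ 2 - d) = 1 := by
        obtain ⟨y, hy⟩ := hunit.exists_right_inv
        have h1 : (t ^ 2 - d) * (y : K) = 1 := by
          have := congrArg (fun z : v.valuationSubring => (z : K)) hy
          simpa using this
        have hv : v (t ^ 2 - d) * v (y : K) = 1 := by rw [← map_mul, h1, map_one]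
        have hle1 : v (t ^ 2 - d) ≤ 1 := htd
        have hle2 : v (y : K) ≤ 1 := y.2
        refine le_antisymm hle1 ?_
        calc (1 : ℤₘ₀) = v (t ^ 2 - d) * v (y : K) := hv.symm
          _ ≤ v (t ^ 2 - d) * 1 := mul_le_mul_right hle2 _
          _ = v (t ^ 2 - d) := mul_one _
      -- now a² - d b² = b² (t² - d)
      have hfact : a ^ 2 - d * b ^ 2 = b ^ 2 * (t ^ 2 - d) := by
        field_simp [ht]
        rw [ht]
        field_simp
      obtain ⟨nb, hnb⟩ := WithZero.ne_zero_iff_exists.mp hvb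
      refine ⟨nb, ?_⟩
      rw [hfact, map_mul, hv1, mul_one, map_pow, ← hnb]
    · -- distinct valuations
      have hmax : v (a ^ 2 - d * b ^ 2) = max (v (a ^ 2)) (v (d * b ^ 2)) := by
        rw [sub_eq_add_neg, Valuation.map_add_of_distinct_val, Valuation.map_neg]
        rw [Valuation.map_neg]
        exact hne
      rcases max_cases (v (a ^ 2)) (v (d * b ^ 2)) with ⟨hm, hle⟩ | ⟨hm, hlt⟩
      · -- max is v (a²); then a ≠ 0 since v (d b²) ≠ 0
        have hdb : v (d * b ^ 2) ≠ 0 := by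
          simp only [map_mul, map_pow, hd, one_mul]
          exact pow_ne_zero 2 hvb
        have hva2 : v (a ^ 2) ≠ 0 := fun h0 => hdb (le_antisymm (h0 ▸ hle) zero_le')
        have hva : v a ≠ 0 := fun h0 => hva2 (by rw [map_pow, h0, zero_pow (by norm_num)])
        refine ⟨WithZero.unzero hva, ?_⟩
        rw [hmax, hm, map_pow, WithZero.coe_unzero]
      · refine ⟨WithZero.unzero hvb, ?_⟩
        rw [hmax, hm, map_mul, hd, one_mul, map_pow, WithZero.coe_unzero]

/-- Parity: an "odd" valuation never equals an "even" one. -/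
lemma aux_odd_ne_even (γ δ : Multiplicative ℤ) :
    ((Multiplicative.ofAdd (-1 : ℤ) : Multiplicative ℤ) : ℤₘ₀) * (δ : ℤₘ₀) ^ 2
      ≠ (γ : ℤₘ₀) ^ 2 := by
  intro h
  rw [← WithZero.coe_pow, ← WithZero.coe_pow, ← WithZero.coe_mul, WithZero.coe_inj] at h
  have := congrArg Multiplicative.toAdd h
  simp only [toAdd_mul, toAdd_pow, toAdd_ofAdd, nsmul_eq_mul] at this
  omega

end Aux

/-- Over a field `K` with a `ℤₘ₀`-valued valuation `v`, if `d` is a unit of the valuation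
ring (`v d = 1`) whose residue is not a square in the residue field, and `π` is a
uniformizer (`v π = ofAdd (-1)`), then the quaternion algebra `ℍ[K, d, π]` is a division
ring: every nonzero element is a unit. -/
theorem quaternionAlgebra_isUnit_of_ne_zero
    (K : Type*) [Field K] (v : Valuation K ℤₘ₀) (d π : K)
    (hd : v d = 1)
    (hd_res : ¬ IsSquare (IsLocalRing.residue v.valuationSubring
      ⟨d, (Valuation.mem_valuationSubring_iff v d).mpr hd.le⟩))
    (hπ : v π = (Multiplicative.ofAdd (-1 : ℤ) : Multiplicative ℤ)) :
    ∀ x : ℍ[K, d, π], x ≠ 0 → IsUnit x := by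
  intro x hx
  set a := x.re with ha
  set b := x.imI with hb
  set c := x.imJ with hc
  set e := x.imK with he
  set A : K := a ^ 2 - d * b ^ 2 with hA
  set B : K := c ^ 2 - d * e ^ 2 with hB
  set N : K := A - π * B with hN
  -- N is the reduced norm
  have hNre : (x * star x).re = N := by
    simp only [QuaternionAlgebra.re_mul, QuaternionAlgebra.re_star, QuaternionAlgebra.imI_star,
      QuaternionAlgebra.imJ_star, QuaternionAlgebra.imK_star, hN, hA, hB, ← ha, ← hb, ← hc, ← he]
    ring
  -- N is nonzero
  have hNne : N ≠ 0 := by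
    by_cases hab : a = 0 ∧ b = 0
    · by_cases hce : c = 0 ∧ e = 0
      · exfalso
        apply hx
        exact QuaternionAlgebra.ext hab.1 hab.2 hce.1 hce.2
      · -- N = -π * B, B has even valuation, π odd
        have hce' : c ≠ 0 ∨ e ≠ 0 := by tauto
        obtain ⟨δ, hδ⟩ := aux_even_val v d hd hd_res c e hce'
        have hA0 : A = 0 := by rw [hA, hab.1, hab.2]; ring
        intro h0
        rw [hN, hA0, zero_sub, neg_eq_zero] at h0
        have := congrArg v h0
        rw [map_mul, hπ, hδ, map_zero] at this
        exact (mul_ne_zero (WithZero.coe_ne_zero) (pow_ne_zero 2 WithZero.coe_ne_zero)) this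
    · have hab' : a ≠ 0 ∨ b ≠ 0 := by tauto
      obtain ⟨γ, hγ⟩ := aux_even_val v d hd hd_res a b hab'
      by_cases hce : c = 0 ∧ e = 0
      · have hB0 : B = 0 := by rw [hB, hce.1, hce.2]; ring
        intro h0
        rw [hN, hB0, mul_zero, sub_zero] at h0
        have := congrArg v h0
        rw [hγ, map_zero] at this
        exact (pow_ne_zero 2 WithZero.coe_ne_zero) this
      · have hce' : c ≠ 0 ∨ e ≠ 0 := by tauto
        obtain ⟨δ, hδ⟩ := aux_even_val v d hd hd_res c e hce'
        have hdist : v A ≠ v (-(π * B)) := by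
          rw [Valuation.map_neg, map_mul, hπ, hδ, hγ]
          exact fun h' => aux_odd_ne_even γ δ h'.symm
        have : v N = max (v A) (v (-(π * B))) := by
          rw [hN, sub_eq_add_neg]
          exact Valuation.map_add_of_distinct_val v hdist
        intro h0
        rw [h0, map_zero] at this
        rcases max_cases (v A) (v (-(π * B))) with ⟨hm, _⟩ | ⟨hm, _⟩
        · rw [hm, hγ] at this
          exact (pow_ne_zero 2 WithZero.coe_ne_zero) this.symm
        · rw [hm, Valuation.map_neg, map_mul, hπ, hδ] at this
          exact (mul_ne_zero (WithZero.coe_ne_zero)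
            (pow_ne_zero 2 WithZero.coe_ne_zero)) this.symm
  -- construct the inverse
  have h1 : x * star x = (N : ℍ[K, d, π]) := by
    rw [QuaternionAlgebra.mul_star_eq_coe, hNre]
  have h2 : star x * x = (N : ℍ[K, d, π]) := by
    rw [star_comm_self', h1]
  refine ⟨⟨x, N⁻¹ • star x, ?_, ?_⟩, rfl⟩
  · rw [Algebra.mul_smul_comm, h1, QuaternionAlgebra.smul_coe, inv_mul_cancel₀ hNne,
      QuaternionAlgebra.coe_one]
  · rw [Algebra.smul_mul_assoc, h2, QuaternionAlgebra.smul_coe, inv_mul_cancel₀ hNne,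
      QuaternionAlgebra.coe_one]
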